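/- Let R be a ring and ω an R-R-bimodule. If ω is free of rank one as a left R-module, then there exists a ring endomorphism μ of R such that ω is isomorphic to R_μ as an R-R-bimodule. If moreover ω is an invertible R-R-bimodule, then μ is an automorphism of R. -/
import Mathlib


set_option maxHeartbeats 1000000
set_option synthInstance.maxHeartbeats 400000

noncomputable section
open TensorProduct MulOpposite

universe u

section Balanced
variable (R : Type u) [Ring R]

/-- The subgroup of balancing relations in `M ⊗ N` over `R`. -/
def balRel (M : Type u) [AddCommGroup M] [Module Rᵐᵒᵖ M]
    (N : Type u) [AddCommGroup N] [Module R N] : Submodule ℤ (M ⊗[ℤ] N) :=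
  Submodule.span ℤ
    {z | ∃ (a : R) (m : M) (n : N), z = (op a • m) ⊗ₜ[ℤ] n - m ⊗ₜ[ℤ] (a • n)}

variable (M : Type u) [AddCommGroup M] [Module R M] [Module Rᵐᵒᵖ M]
variable (N : Type u) [AddCommGroup N] [Module R N] [Module Rᵐᵒᵖ N]
variable (P : Type u) [AddCommGroup P] [Module R P] [Module Rᵐᵒᵖ P]

/-- `F` exhibits the `R`-`R`-bimodule `P` as the balanced tensor product `M ⊗_R N`. -/
structure IsTensorProductIso (F : M ⊗[ℤ] N →ₗ[ℤ] P) : Prop where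
  map_left : ∀ (a : R) (m : M) (n : N), F ((a • m) ⊗ₜ[ℤ] n) = a • F (m ⊗ₜ[ℤ] n)
  map_right : ∀ (a : Rᵐᵒᵖ) (m : M) (n : N), F (m ⊗ₜ[ℤ] (a • n)) = a • F (m ⊗ₜ[ℤ] n)
  surjective : Function.Surjective F
  ker_eq : LinearMap.ker F = balRel R M N

/-- An `R`-`R`-bimodule `M` is invertible if there is a bimodule `N` with
`M ⊗_R N ≅ R ≅ N ⊗_R M` as bimodules. -/
def IsInvertibleBimodule : Prop :=
  ∃ (N : Type u) (_ : AddCommGroup N) (_ : Module R N) (_ : Module Rᵐᵒᵖ N),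
    (∃ F : M ⊗[ℤ] N →ₗ[ℤ] R, IsTensorProductIso R M N R F) ∧
      (∃ G : N ⊗[ℤ] M →ₗ[ℤ] R, IsTensorProductIso R N M R G)

end Balanced

/-! ## Statement 2
Let `R` be a ring and `ω` an `R`-`R`-bimodule.  If `ω` is free of rank one as a left
`R`-module, then there is a ring endomorphism `μ` of `R` with `ω ≅ R_μ` as bimodules
(`R_μ` is `R` with right action twisted by `μ`:  an additive isomorphism `g : ω ≃ R`
with `g (r • x) = r * g x` and `g (x · r) = g x * μ r`).
If moreover `ω` is an invertible bimodule, then `μ` is an automorphism. -/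
theorem statement2 (R : Type u) [Ring R]
    (ω : Type u) [AddCommGroup ω] [Module R ω] [Module Rᵐᵒᵖ ω] [SMulCommClass R Rᵐᵒᵖ ω]
    (e : ω) (he : Function.Bijective fun r : R => r • e) :
    (∃ μ : R →+* R, ∃ g : ω ≃+ R,
        (∀ (r : R) (x : ω), g (r • x) = r * g x) ∧
        (∀ (r : R) (x : ω), g (op r • x) = g x * μ r)) ∧
      (IsInvertibleBimodule R ω →
        ∃ μ : R ≃+* R, ∃ g : ω ≃+ R,
          (∀ (r : R) (x : ω), g (r • x) = r * g x) ∧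
          (∀ (r : R) (x : ω), g (op r • x) = g x * μ r)) := by
  classical
  -- The additive iso `E : R ≃+ ω`, `r ↦ r • e`, and its inverse `g`.
  let Ehom : R →+ ω :=
    { toFun := fun r : R => r • e
      map_zero' := zero_smul R e
      map_add' := fun a b => add_smul a b e }
  let E : R ≃+ ω := AddEquiv.ofBijective Ehom he
  let g : ω ≃+ R := E.symm
  have hginv : ∀ x : ω, (g x) • e = x := fun x => E.apply_symm_apply x
  have hgE : ∀ r : R, g (r • e) = r := fun r => E.symm_apply_apply r
  have hge : g e = 1 := by
    have := hgE 1
    rwa [one_smul] at this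
  have hgsmul : ∀ (r : R) (x : ω), g (r • x) = r * g x := by
    intro r x
    conv_lhs => rw [← hginv x, ← mul_smul]
    exact hgE _
  -- the endomorphism μ
  set μ0 : R → R := fun r => g (op r • e) with hμ0
  have hμe : ∀ r : R, (μ0 r) • e = op r • e := fun r => hginv _
  have hgop : ∀ (r : R) (x : ω), g (op r • x) = g x * μ0 r := by
    intro r x
    conv_lhs => rw [← hginv x, ← smul_comm, ← hμe r, ← mul_smul]
    exact hgE _
  have hμone : μ0 1 = 1 := by
    show g (op (1 : R) • e) = 1
    rw [op_one, one_smul, hge]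
  have hμmul : ∀ r s : R, μ0 (r * s) = μ0 r * μ0 s := by
    intro r s
    show g (op (r * s) • e) = _
    rw [op_mul, mul_smul]
    rw [hgop s (op r • e)]
  have hμadd : ∀ r s : R, μ0 (r + s) = μ0 r + μ0 s := by
    intro r s
    show g (op (r + s) • e) = _
    rw [op_add, add_smul, map_add]
  let μ : R →+* R :=
    { toFun := μ0
      map_one' := hμone
      map_mul' := hμmul
      map_zero' := by
        show g (op (0 : R) • e) = 0
        rw [op_zero, zero_smul, map_zero]
      map_add' := hμadd }
  have hμ : ∀ r : R, μ r = μ0 r := fun _ => rfl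
  constructor
  · exact ⟨μ, g, hgsmul, fun r x => hgop r x⟩
  -- Part 2: invertibility implies μ is bijective
  rintro ⟨N, _, _, _, ⟨F, hF⟩, ⟨G, hG⟩⟩
  -- relations coming from the kernels
  have hFrel : ∀ (a : R) (m : ω) (n : N), F ((op a • m) ⊗ₜ[ℤ] n) = F (m ⊗ₜ[ℤ] (a • n)) := by
    intro a m n
    have hmem : ((op a • m) ⊗ₜ[ℤ] n - m ⊗ₜ[ℤ] (a • n)) ∈ LinearMap.ker F := by
      rw [hF.ker_eq]
      exact Submodule.subset_span ⟨a, m, n, rfl⟩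
    rw [LinearMap.mem_ker, map_sub, sub_eq_zero] at hmem
    exact hmem
  have hGrel : ∀ (a : R) (n : N) (m : ω), G ((op a • n) ⊗ₜ[ℤ] m) = G (n ⊗ₜ[ℤ] (a • m)) := by
    intro a n m
    have hmem : ((op a • n) ⊗ₜ[ℤ] m - n ⊗ₜ[ℤ] (a • m)) ∈ LinearMap.ker G := by
      rw [hG.ker_eq]
      exact Submodule.subset_span ⟨a, n, m, rfl⟩
    rw [LinearMap.mem_ker, map_sub, sub_eq_zero] at hmem
    exact hmem
  -- the maps f and h
  let f : N →+ R := AddMonoidHom.mk' (fun n => F (e ⊗ₜ[ℤ] n))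
    (fun n m => by show F (e ⊗ₜ[ℤ] (n + m)) = F (e ⊗ₜ[ℤ] n) + F (e ⊗ₜ[ℤ] m); rw [tmul_add, map_add])
  let h : N →+ R := AddMonoidHom.mk' (fun n => G (n ⊗ₜ[ℤ] e))
    (fun n m => by show G ((n + m) ⊗ₜ[ℤ] e) = G (n ⊗ₜ[ℤ] e) + G (m ⊗ₜ[ℤ] e); rw [add_tmul, map_add])
  have hFap : ∀ (x : ω) (n : N), F (x ⊗ₜ[ℤ] n) = g x * f n := by
    intro x n
    conv_lhs => rw [← hginv x]
    rw [hF.map_left, smul_eq_mul]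
    rfl
  have hfs : ∀ (a : R) (n : N), f (a • n) = μ0 a * f n := by
    intro a n
    show F (e ⊗ₜ[ℤ] (a • n)) = _
    rw [← hFrel, ← hμe a, hF.map_left, smul_eq_mul]
    rfl
  have hfop : ∀ (a : R) (n : N), f (op a • n) = f n * a := by
    intro a n
    show F (e ⊗ₜ[ℤ] (op a • n)) = _
    rw [hF.map_right, smul_eq_mul_unop, unop_op]
    rfl
  have hhs : ∀ (a : R) (n : N), h (a • n) = a * h n := by
    intro a n
    show G ((a • n) ⊗ₜ[ℤ] e) = _
    rw [hG.map_left, smul_eq_mul]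
    rfl
  have hhop : ∀ (a : R) (n : N), h (op (μ0 a) • n) = h n * a := by
    intro a n
    show G ((op (μ0 a) • n) ⊗ₜ[ℤ] e) = _
    rw [hGrel, hμe a, hG.map_right, smul_eq_mul_unop, unop_op]
    rfl
  have hGap : ∀ (n : N) (x : ω), G (n ⊗ₜ[ℤ] x) = h (op (g x) • n) := by
    intro n x
    show _ = G ((op (g x) • n) ⊗ₜ[ℤ] e)
    rw [hGrel, hginv x]
  -- h is surjective
  have hhsurj : ∀ r : R, ∃ n : N, h n = r := by
    intro r
    obtain ⟨z, hz⟩ := hG.surjective r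
    suffices hzr : ∀ z : N ⊗[ℤ] ω, ∃ n : N, h n = G z by
      obtain ⟨n, hn⟩ := hzr z
      exact ⟨n, by rw [hn, hz]⟩
    intro z
    induction z using TensorProduct.induction_on with
    | zero => exact ⟨0, by rw [map_zero, map_zero]⟩
    | tmul n x => exact ⟨op (g x) • n, (hGap n x).symm⟩
    | add z₁ z₂ ih₁ ih₂ =>
      obtain ⟨n₁, hn₁⟩ := ih₁
      obtain ⟨n₂, hn₂⟩ := ih₂
      exact ⟨n₁ + n₂, by rw [map_add, map_add, hn₁, hn₂]⟩
  -- the comparison maps Ψ and Ψ'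
  have hμz : ∀ (c : ℤ) (r : R), μ0 (c • r) = c • μ0 r := fun c r => map_zsmul μ c r
  let Ψ : ω ⊗[ℤ] N →ₗ[ℤ] R := TensorProduct.lift (LinearMap.mk₂ ℤ
    (fun (x : ω) (n : N) => g x * μ0 (h n))
    (fun x y n => by show g (x + y) * μ0 (h n) = g x * μ0 (h n) + g y * μ0 (h n)
                     rw [map_add, add_mul])
    (fun c x n => by show g (c • x) * μ0 (h n) = c • (g x * μ0 (h n))
                     rw [map_zsmul, smul_mul_assoc])
    (fun x n m => by show g x * μ0 (h (n + m)) = g x * μ0 (h n) + g x * μ0 (h m)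
                     rw [map_add, hμadd, mul_add])
    (fun c x n => by show g x * μ0 (h (c • n)) = c • (g x * μ0 (h n))
                     rw [map_zsmul, hμz, mul_smul_comm]))
  have hΨap : ∀ (x : ω) (n : N), Ψ (x ⊗ₜ[ℤ] n) = g x * μ0 (h n) := fun x n => rfl
  let Ψ' : N ⊗[ℤ] ω →ₗ[ℤ] R := TensorProduct.lift (LinearMap.mk₂ ℤ
    (fun (n : N) (x : ω) => f n * g x)
    (fun n m x => by show f (n + m) * g x = f n * g x + f m * g x
                     rw [map_add, add_mul])
    (fun c n x => by show f (c • n) * g x = c • (f n * g x)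
                     rw [map_zsmul, smul_mul_assoc])
    (fun n x y => by show f n * g (x + y) = f n * g x + f n * g y
                     rw [map_add, mul_add])
    (fun c n x => by show f n * g (c • x) = c • (f n * g x)
                     rw [map_zsmul, mul_smul_comm]))
  have hΨ'ap : ∀ (n : N) (x : ω), Ψ' (n ⊗ₜ[ℤ] x) = f n * g x := fun n x => rfl
  -- Ψ kills balRel R ω N
  have hbalΨ : balRel R ω N ≤ LinearMap.ker Ψ := by
    rw [balRel, Submodule.span_le]
    rintro z ⟨a, m, n, rfl⟩
    simp only [SetLike.mem_coe, LinearMap.mem_ker, map_sub, sub_eq_zero]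
    rw [hΨap, hΨap, hgop, hhs, hμmul, mul_assoc]
  have hbalΨ' : balRel R N ω ≤ LinearMap.ker Ψ' := by
    rw [balRel, Submodule.span_le]
    rintro z ⟨a, n, m, rfl⟩
    simp only [SetLike.mem_coe, LinearMap.mem_ker, map_sub, sub_eq_zero]
    rw [hΨ'ap, hΨ'ap, hfop, hgsmul, mul_assoc]
  have hkerΨ : ∀ z z' : ω ⊗[ℤ] N, F z = F z' → Ψ z = Ψ z' := by
    intro z z' hzz
    have : (z - z') ∈ LinearMap.ker F := by
      rw [LinearMap.mem_ker, map_sub, hzz, sub_self]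
    rw [hF.ker_eq] at this
    have := hbalΨ this
    rw [LinearMap.mem_ker, map_sub, sub_eq_zero] at this
    exact this
  have hkerΨ' : ∀ z z' : N ⊗[ℤ] ω, G z = G z' → Ψ' z = Ψ' z' := by
    intro z z' hzz
    have : (z - z') ∈ LinearMap.ker G := by
      rw [LinearMap.mem_ker, map_sub, hzz, sub_self]
    rw [hG.ker_eq] at this
    have := hbalΨ' this
    rw [LinearMap.mem_ker, map_sub, sub_eq_zero] at this
    exact this
  -- left-scaling operators
  let L : R → (ω ⊗[ℤ] N →ₗ[ℤ] ω ⊗[ℤ] N) := fun r => TensorProduct.map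
    (AddMonoidHom.mk' (fun x : ω => r • x) (fun x y => smul_add r x y)).toIntLinearMap
    LinearMap.id
  have hLap : ∀ (r : R) (x : ω) (n : N), L r (x ⊗ₜ[ℤ] n) = (r • x) ⊗ₜ[ℤ] n :=
    fun r x n => rfl
  let L' : R → (N ⊗[ℤ] ω →ₗ[ℤ] N ⊗[ℤ] ω) := fun r => TensorProduct.map
    (AddMonoidHom.mk' (fun x : N => r • x) (fun x y => smul_add r x y)).toIntLinearMap
    LinearMap.id
  have hL'ap : ∀ (r : R) (n : N) (x : ω), L' r (n ⊗ₜ[ℤ] x) = (r • n) ⊗ₜ[ℤ] x :=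
    fun r n x => rfl
  have hFL : ∀ (r : R) (z : ω ⊗[ℤ] N), F (L r z) = r * F z := by
    intro r z
    induction z using TensorProduct.induction_on with
    | zero => simp only [map_zero, mul_zero]
    | tmul x n => rw [hLap, hF.map_left, smul_eq_mul]
    | add z₁ z₂ ih₁ ih₂ => rw [map_add, map_add, map_add, ih₁, ih₂, mul_add]
  have hΨL : ∀ (r : R) (z : ω ⊗[ℤ] N), Ψ (L r z) = r * Ψ z := by
    intro r z
    induction z using TensorProduct.induction_on with
    | zero => simp only [map_zero, mul_zero]
    | tmul x n => rw [hLap, hΨap, hΨap, hgsmul, mul_assoc]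
    | add z₁ z₂ ih₁ ih₂ => rw [map_add, map_add, map_add, ih₁, ih₂, mul_add]
  have hGL : ∀ (r : R) (z : N ⊗[ℤ] ω), G (L' r z) = r * G z := by
    intro r z
    induction z using TensorProduct.induction_on with
    | zero => simp only [map_zero, mul_zero]
    | tmul n x => rw [hL'ap, hG.map_left, smul_eq_mul]
    | add z₁ z₂ ih₁ ih₂ => rw [map_add, map_add, map_add, ih₁, ih₂, mul_add]
  have hΨ'L : ∀ (r : R) (z : N ⊗[ℤ] ω), Ψ' (L' r z) = μ0 r * Ψ' z := by
    intro r z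
    induction z using TensorProduct.induction_on with
    | zero => simp only [map_zero, mul_zero]
    | tmul n x => rw [hL'ap, hΨ'ap, hΨ'ap, hfs, mul_assoc]
    | add z₁ z₂ ih₁ ih₂ => rw [map_add, map_add, map_add, ih₁, ih₂, mul_add]
  -- the units u and v
  obtain ⟨z₁, hz₁⟩ := hF.surjective 1
  obtain ⟨z₂, hz₂⟩ := hG.surjective 1
  set u : R := Ψ z₁ with hu
  set v : R := Ψ' z₂ with hv
  have hA : ∀ z : ω ⊗[ℤ] N, Ψ z = F z * u := by
    intro z
    have h1 : F z = F (L (F z) z₁) := by rw [hFL, hz₁, mul_one]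
    rw [hkerΨ z (L (F z) z₁) h1, hΨL]
  have hB : ∀ z : N ⊗[ℤ] ω, Ψ' z = μ0 (G z) * v := by
    intro z
    have h1 : G z = G (L' (G z) z₂) := by rw [hGL, hz₂, mul_one]
    rw [hkerΨ' z (L' (G z) z₂) h1, hΨ'L]
  have key1 : ∀ n : N, μ0 (h n) = f n * u := by
    intro n
    have := hA (e ⊗ₜ[ℤ] n)
    rw [hΨap, hge, one_mul, hFap, hge, one_mul] at this
    exact this
  have key2 : ∀ n : N, f n = μ0 (h n) * v := by
    intro n
    have := hB (n ⊗ₜ[ℤ] e)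
    rw [hΨ'ap, hge, mul_one] at this
    exact this
  obtain ⟨n₀, hn₀⟩ := hhsurj 1
  have hfn₀ : f n₀ = v := by rw [key2, hn₀, hμone, one_mul]
  have hvu : v * u = 1 := by
    have := key1 n₀
    rw [hn₀, hμone, hfn₀] at this
    exact this.symm
  have huv : u * v = 1 := by
    have hC : ∀ z : ω ⊗[ℤ] N, F z * (u * v) = F z := by
      intro z
      induction z using TensorProduct.induction_on with
      | zero => rw [map_zero, zero_mul]
      | tmul x n =>
        rw [hFap, mul_assoc, ← mul_assoc (f n), ← key1, ← key2]
      | add z₁ z₂ ih₁ ih₂ => rw [map_add, add_mul, ih₁, ih₂]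
    have := hC z₁
    rwa [hz₁, one_mul] at this
  -- the retraction τ
  set τ : R → R := fun b => h (op b • n₀) with hτ
  have hτμ : ∀ a : R, τ (μ0 a) = a := by
    intro a
    show h (op (μ0 a) • n₀) = a
    rw [hhop, hn₀, one_mul]
  have hμτ : ∀ b : R, μ0 (τ b) = v * b * u := by
    intro b
    show μ0 (h (op b • n₀)) = _
    rw [key1, hfop, hfn₀]
  have hinj : Function.Injective μ0 := by
    intro a a' haa
    have := hτμ a
    rw [haa, hτμ a'] at this
    exact this.symm
  have hsurjμ : Function.Surjective μ0 := by
    intro c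
    refine ⟨τ (u * c * v), ?_⟩
    rw [hμτ]
    simp only [← mul_assoc]
    rw [hvu, one_mul, mul_assoc, hvu, mul_one]
  exact ⟨RingEquiv.ofBijective μ ⟨hinj, hsurjμ⟩, g, hgsmul, fun r x => hgop r x⟩
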